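/- Under both the overlap preference model and the cost preference model, no pair ⟨R, F⟩ consisting of a non-wasteful shortlisting rule R and an exhaustive allocation rule F is R-FSSP with respect to anticipative manipulation (R-FSSP-A). -/
import Mathlib


open Finset

namespace PB

open scoped Classical

/-- An approval/shortlisting profile for `n` agents: each agent contributes a
finite set of (indices of) projects. Projects are identified with their indices. -/
abbrev Profile (n : ℕ) := Fin n → Finset ℕ

/-- The union `⋃ P` of all proposals in a profile. -/
def unionP {n : ℕ} (P : Profile n) : Finset ℕ := Finset.univ.sup P

/-- Encoding of a finite set of projects; a set is lexicographically preferred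
(amongst the projects on which two sets differ, the one with the lowest index
belongs to the preferred set) iff its encoding is larger. -/
noncomputable def enc (P : Finset ℕ) : ℚ := P.sum fun i => (1 / 2 : ℚ) ^ i

/-- The canonical tie-breaking rule `T` on a family of sets of projects:
the (unique) lexicographically first set of the family. -/
noncomputable def Tfam (𝔓 : Finset (Finset ℕ)) : Finset ℕ :=
  if h : ∃ P ∈ 𝔓, ∀ Q ∈ 𝔓, enc Q ≤ enc P then h.choose else ∅

/-- The `r`-least element of a finite set of projects (`r` read as "strictly before"). -/
noncomputable def first (r : ℕ → ℕ → Prop) (P : Finset ℕ) : ℕ :=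
  if h : ∃ p ∈ P, ∀ q ∈ P, q ≠ p → r p q then h.choose else 0

/-- The canonical tie-breaking rule `T` on a nonempty set of projects: least index. -/
noncomputable def Tproj (P : Finset ℕ) : ℕ := first (· < ·) P

noncomputable def greedyAux (c : ℕ → ℕ) (r : ℕ → ℕ → Prop) : ℕ → Finset ℕ → ℕ → Finset ℕ
  | 0, _, _ => ∅
  | fuel + 1, P, b =>
    if P.Nonempty then
      if c (first r P) ≤ b then
        insert (first r P) (greedyAux c r fuel (P.erase (first r P)) (b - c (first r P)))
      else greedyAux c r fuel (P.erase (first r P)) b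
    else ∅

/-- Greedy selection: examine the projects of `P` following the strict order `r`,
selecting a project iff doing so keeps the total cost within the budget `B`. -/
noncomputable def GREED (c : ℕ → ℕ) (B : ℕ) (P : Finset ℕ) (r : ℕ → ℕ → Prop) : Finset ℕ :=
  greedyAux c r P.card P B

/-- A shortlisting rule: for every number `n` of agents, cost function, budget
limit, universe `ℙ` of projects and shortlisting profile, a shortlist. -/
abbrev ShortRule := ∀ n : ℕ, (ℕ → ℕ) → ℕ → Finset ℕ → Profile n → Finset ℕ

/-- An allocation rule: for every number `n` of agents, cost function, budget
limit, set `Sh` of shortlisted projects and approval profile, a budget allocation. -/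
abbrev AllocRule := ∀ n : ℕ, (ℕ → ℕ) → ℕ → Finset ℕ → Profile n → Finset ℕ

/-- A shortlisting rule must return a subset of the union of the proposals. -/
def IsShortRule (R : ShortRule) : Prop :=
  ∀ (n : ℕ) (c : ℕ → ℕ) (B : ℕ) (ℙ : Finset ℕ) (P : Profile n),
    (∀ j, P j ⊆ ℙ) → R n c B ℙ P ⊆ unionP P

/-- An allocation rule must return a feasible budget allocation. -/
def IsAllocRule (F : AllocRule) : Prop :=
  ∀ (n : ℕ) (c : ℕ → ℕ) (B : ℕ) (Sh : Finset ℕ) (A : Profile n),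
    (∀ j, A j ⊆ Sh) → F n c B Sh A ⊆ Sh ∧ (F n c B Sh A).sum c ≤ B

/-- The nomination shortlisting rule. -/
def nomination : ShortRule := fun _ _ _ _ P => unionP P

/-- Non-wastefulness of a shortlisting rule. -/
def NonWasteful (R : ShortRule) : Prop :=
  ∀ (n : ℕ) (c : ℕ → ℕ) (B : ℕ) (ℙ : Finset ℕ) (P : Profile n),
    (∀ p ∈ ℙ, c p ≤ B) → (∀ j, P j ⊆ ℙ) →
    B ≤ (R n c B ℙ P).sum c ∨ R n c B ℙ P = unionP P

/-- A shortlist `S` is representatively dominated (given instance and profile). -/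
def RepDominated {n : ℕ} (c : ℕ → ℕ) (ℙ : Finset ℕ) (P : Profile n) (S : Finset ℕ) : Prop :=
  ∃ S' ⊆ ℙ, S'.sum c ≤ S.sum c ∧
    (∀ i, (S ∩ P i).card ≤ (S' ∩ P i).card) ∧ ∃ i, (S ∩ P i).card < (S' ∩ P i).card

/-- Representation efficiency of a shortlisting rule. -/
def RepEfficient (R : ShortRule) : Prop :=
  ∀ (n : ℕ) (c : ℕ → ℕ) (B : ℕ) (ℙ : Finset ℕ) (P : Profile n),
    (∀ p ∈ ℙ, c p ≤ B) → (∀ j, P j ⊆ ℙ) →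
    ¬ RepDominated c ℙ P (R n c B ℙ P)

/-- The representation score `Σ_i Σ_{ℓ=0}^{|P_i ∩ S|} (1/n)^ℓ`. -/
noncomputable def reprScore (n : ℕ) (P : Profile n) (S : Finset ℕ) : ℚ :=
  ∑ i, ∑ l ∈ Finset.range ((P i ∩ S).card + 1), (1 / (n : ℚ)) ^ l

/-- The `k`-equal-representation shortlisting rule. -/
noncomputable def equalRepr (k : ℕ) : ShortRule := fun n c B _ P =>
  Tfam (((unionP P).powerset).filter fun S =>
    S.sum c ≤ k * B ∧
    ∀ S' ∈ (unionP P).powerset, S'.sum c ≤ k * B → reprScore n P S' ≤ reprScore n P S)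

/-- The geometric median of a set of projects w.r.t. a distance `δ`. -/
noncomputable def med (δ : ℕ → ℕ → ℝ) (V : Finset ℕ) : ℕ :=
  Tproj (V.filter fun p => ∀ q ∈ V, V.sum (fun x => δ p x) ≤ V.sum (fun x => δ q x))

def IsPartition (V : Finset (Finset ℕ)) (P : Finset ℕ) : Prop :=
  (∀ v ∈ V, v.Nonempty) ∧ V.sup id = P ∧ ∀ v ∈ V, ∀ w ∈ V, v ≠ w → Disjoint v w

/-- `(k, ℓ)`-Voronoï partitions w.r.t. `δ`. -/
def IsVoronoi (δ : ℕ → ℕ → ℝ) (c : ℕ → ℕ) (B k : ℕ) (ℓ : ℝ)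
    (V : Finset (Finset ℕ)) (P : Finset ℕ) : Prop :=
  IsPartition V P ∧ (V.sum fun v => c (med δ v)) ≤ k * B ∧
  ∀ v ∈ V, ∀ p ∈ v,
    (∀ w ∈ V, w ≠ v → δ p (med δ v) ≤ δ p (med δ w)) ∧ δ p (med δ v) ≤ ℓ

/-- The smallest `ℓ` such that a `(k, ℓ)`-Voronoï partition of `P` exists. -/
noncomputable def lstar (δ : ℕ → ℕ → ℝ) (c : ℕ → ℕ) (B k : ℕ) (P : Finset ℕ) : ℝ :=
  sInf {ℓ : ℝ | ∃ V : Finset (Finset ℕ), IsVoronoi δ c B k ℓ V P}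

/-- The `k`-median shortlisting rule w.r.t. the distance `δ`. -/
noncomputable def kMedian (δ : ℕ → ℕ → ℝ) (k : ℕ) : ShortRule := fun _ c B _ P =>
  Tfam ((((unionP P).powerset.powerset).filter fun V =>
    IsVoronoi δ c B k (lstar δ c B k (unionP P)) V (unionP P)).image fun V => V.image (med δ))

/-- `δ` is a metric (on the universe of conceivable projects). -/
def IsMetric (δ : ℕ → ℕ → ℝ) : Prop :=
  (∀ p q, δ p q = 0 ↔ p = q) ∧ (∀ p q, δ p q = δ q p) ∧ ∀ p q r, δ p r ≤ δ p q + δ q r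

/-- The approval score of project `p` in profile `A`. -/
def appScore {n : ℕ} (A : Profile n) (p : ℕ) : ℕ :=
  (Finset.univ.filter fun i => p ∈ A i).card

/-- The greedy-approval allocation rule. -/
noncomputable def greedyApproval : AllocRule := fun _ c B Sh A =>
  GREED c B Sh fun p q => appScore A q < appScore A p ∨ (appScore A p = appScore A q ∧ p < q)

/-- The approval-maximising allocation rule (canonical tie-breaking). -/
noncomputable def approvalMax : AllocRule := fun _ c B Sh A =>
  Tfam ((Sh.powerset).filter fun S =>
    S.sum c ≤ B ∧ ∀ S' ∈ Sh.powerset, S'.sum c ≤ B → S'.sum (appScore A) ≤ S.sum (appScore A))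

/-- `A` is an exhaustive budget allocation for the instance `⟨Sh, c, B⟩`. -/
def ExhaustiveAlloc (c : ℕ → ℕ) (B : ℕ) (Sh A : Finset ℕ) : Prop :=
  A ⊆ Sh ∧ A.sum c ≤ B ∧ ∀ p ∈ Sh, p ∉ A → ¬ (A.sum c + c p ≤ B)

/-- An allocation rule is exhaustive if it always returns an exhaustive allocation. -/
def ExhaustiveRule (F : AllocRule) : Prop :=
  ∀ (n : ℕ) (c : ℕ → ℕ) (B : ℕ) (Sh : Finset ℕ) (A : Profile n),
    (∀ j, A j ⊆ Sh) → ExhaustiveAlloc c B Sh (F n c B Sh A)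

/-- Unanimity of an allocation rule. -/
def Unanimous (F : AllocRule) : Prop :=
  ∀ (n : ℕ) (c : ℕ → ℕ) (B : ℕ) (Sh : Finset ℕ) (a : Finset ℕ),
    a ⊆ Sh → a.sum c ≤ B → a ⊆ F n c B Sh (fun _ => a)

/-- Strong unanimity of an allocation rule. -/
def StronglyUnanimous (F : AllocRule) : Prop :=
  ∀ (n : ℕ) (c : ℕ → ℕ) (B : ℕ) (Sh : Finset ℕ) (i : Fin n) (a : Finset ℕ) (A : Profile n),
    3 ≤ n → a ⊆ Sh → a.sum c ≤ B → (∀ j, j ≠ i → A j = a) → a ⊆ F n c B Sh A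

/-- A preference model: given the cost function and an ideal set, the utility
of a budget allocation.  `overlapU` and `costU` are the two models used. -/
abbrev PrefModel := (ℕ → ℕ) → Finset ℕ → Finset ℕ → ℕ

def overlapU : PrefModel := fun _ P A => (A ∩ P).card
def costU : PrefModel := fun c P A => (A ∩ P).sum c

/-- Budget allocations reachable by agent `i` by changing her own ballot. -/
noncomputable def reachable (n : ℕ) (c : ℕ → ℕ) (B : ℕ) (F : AllocRule)
    (Sh : Finset ℕ) (A : Profile n) (i : Fin n) : Finset (Finset ℕ) :=
  (Sh.powerset).image fun b => F n c B Sh (Function.update A i b)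

/-- The best response `A*_i(I, A, F)` of agent `i` (with preference order `r`). -/
noncomputable def Astar (U : PrefModel) (n : ℕ) (c : ℕ → ℕ) (B : ℕ) (F : AllocRule)
    (r : ℕ → ℕ → Prop) (Sh : Finset ℕ) (A : Profile n) (i : Fin n) : Finset ℕ :=
  Tfam ((reachable n c B F Sh A i).filter fun X =>
    ∀ Y ∈ reachable n c B F Sh A i, U c (GREED c B Sh r) Y ≤ U c (GREED c B Sh r) X)

/-- `F*(I, A)`: the outcome after agent `i` best-responds to profile `A`. -/
noncomputable def Fstar (U : PrefModel) (n : ℕ) (c : ℕ → ℕ) (B : ℕ) (F : AllocRule)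
    (r : ℕ → ℕ → Prop) (Sh : Finset ℕ) (A : Profile n) (i : Fin n) : Finset ℕ :=
  F n c B Sh (Function.update A i (Astar U n c B F r Sh A i))

/-- `Pi'` is a successful pessimistic manipulation for agent `i` (base profile `P`). -/
def SuccPess (U : PrefModel) (R : ShortRule) (F : AllocRule) (n : ℕ) (c : ℕ → ℕ) (B : ℕ)
    (ℙ : Finset ℕ) (prefs : Fin n → ℕ → ℕ → Prop) (P : Profile n) (i : Fin n)
    (Pi' : Finset ℕ) : Prop :=
  let Sh := R n c B ℙ P
  let Sh' := R n c B ℙ (Function.update P i Pi')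
  let tp := GREED c B (Sh ∪ Sh') (prefs i)
  (∀ A A' : Profile n, (∀ j, A j ⊆ Sh) → (∀ j, A' j ⊆ Sh') →
      U c tp (Fstar U n c B F (prefs i) Sh A i) ≤ U c tp (Fstar U n c B F (prefs i) Sh' A' i)) ∧
  ∃ A A' : Profile n, (∀ j, A j ⊆ Sh) ∧ (∀ j, A' j ⊆ Sh') ∧
      U c tp (Fstar U n c B F (prefs i) Sh A i) < U c tp (Fstar U n c B F (prefs i) Sh' A' i)

/-- `Pi'` is a successful optimistic manipulation for agent `i` (base profile `P`). -/
def SuccOpt (U : PrefModel) (R : ShortRule) (F : AllocRule) (n : ℕ) (c : ℕ → ℕ) (B : ℕ)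
    (ℙ : Finset ℕ) (prefs : Fin n → ℕ → ℕ → Prop) (P : Profile n) (i : Fin n)
    (Pi' : Finset ℕ) : Prop :=
  let Sh := R n c B ℙ P
  let Sh' := R n c B ℙ (Function.update P i Pi')
  let tp := GREED c B (Sh ∪ Sh') (prefs i)
  ∃ A A' : Profile n, (∀ j, A j ⊆ Sh) ∧ (∀ j, A' j ⊆ Sh') ∧
      U c tp (Fstar U n c B F (prefs i) Sh A i) < U c tp (Fstar U n c B F (prefs i) Sh' A' i)

/-- `Pi'` is a successful anticipative manipulation for agent `i` (base profile `P`). -/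
def SuccAnt (U : PrefModel) (R : ShortRule) (F : AllocRule) (n : ℕ) (c : ℕ → ℕ) (B : ℕ)
    (ℙ : Finset ℕ) (prefs : Fin n → ℕ → ℕ → Prop) (P : Profile n) (i : Fin n)
    (Pi' : Finset ℕ) : Prop :=
  let Sh := R n c B ℙ P
  let Sh' := R n c B ℙ (Function.update P i Pi')
  let tp := GREED c B (Sh ∪ Sh') (prefs i)
  U c tp (Fstar U n c B F (prefs i) Sh (fun j => GREED c B Sh (prefs j)) i)
    < U c tp (Fstar U n c B F (prefs i) Sh' (fun j => GREED c B Sh' (prefs j)) i)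

section FSSP

variable (U : PrefModel) (R : ShortRule) (F : AllocRule)

/-- First-stage strategyproofness, awareness-restricted, pessimistic. -/
def R_FSSP_P : Prop :=
  ∀ (n : ℕ) (c : ℕ → ℕ) (B : ℕ) (ℙ : Finset ℕ) (prefs : Fin n → ℕ → ℕ → Prop)
    (C P : Profile n) (i : Fin n) (Pi' : Finset ℕ),
    (∀ p ∈ ℙ, c p ≤ B) → (∀ j, IsStrictTotalOrder ℕ (prefs j)) →
    (∀ j, C j ⊆ ℙ) → (∀ j, P j ⊆ C j) → Pi' ⊆ C i →
    ¬ SuccPess U R F n c B ℙ prefs (Function.update P i (GREED c B (C i) (prefs i))) i Pi'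

/-- First-stage strategyproofness, awareness-restricted, optimistic. -/
def R_FSSP_O : Prop :=
  ∀ (n : ℕ) (c : ℕ → ℕ) (B : ℕ) (ℙ : Finset ℕ) (prefs : Fin n → ℕ → ℕ → Prop)
    (C P : Profile n) (i : Fin n) (Pi' : Finset ℕ),
    (∀ p ∈ ℙ, c p ≤ B) → (∀ j, IsStrictTotalOrder ℕ (prefs j)) →
    (∀ j, C j ⊆ ℙ) → (∀ j, P j ⊆ C j) → Pi' ⊆ C i →
    ¬ SuccOpt U R F n c B ℙ prefs (Function.update P i (GREED c B (C i) (prefs i))) i Pi'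

/-- First-stage strategyproofness, awareness-restricted, anticipative. -/
def R_FSSP_A : Prop :=
  ∀ (n : ℕ) (c : ℕ → ℕ) (B : ℕ) (ℙ : Finset ℕ) (prefs : Fin n → ℕ → ℕ → Prop)
    (C P : Profile n) (i : Fin n) (Pi' : Finset ℕ),
    (∀ p ∈ ℙ, c p ≤ B) → (∀ j, IsStrictTotalOrder ℕ (prefs j)) →
    (∀ j, C j ⊆ ℙ) → (∀ j, P j ⊆ C j) → Pi' ⊆ C i →
    ¬ SuccAnt U R F n c B ℙ prefs (Function.update P i (GREED c B (C i) (prefs i))) i Pi'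

/-- First-stage strategyproofness, unrestricted, pessimistic. -/
def U_FSSP_P : Prop :=
  ∀ (n : ℕ) (c : ℕ → ℕ) (B : ℕ) (ℙ : Finset ℕ) (prefs : Fin n → ℕ → ℕ → Prop)
    (C P : Profile n) (i : Fin n) (Pi' : Finset ℕ),
    (∀ p ∈ ℙ, c p ≤ B) → (∀ j, IsStrictTotalOrder ℕ (prefs j)) →
    (∀ j, C j ⊆ ℙ) → (∀ j, P j ⊆ C j) → Pi' ⊆ C i ∪ unionP P →
    ¬ SuccPess U R F n c B ℙ prefs
        (Function.update P i (GREED c B (C i ∪ unionP P) (prefs i))) i Pi'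

/-- First-stage strategyproofness, unrestricted, optimistic. -/
def U_FSSP_O : Prop :=
  ∀ (n : ℕ) (c : ℕ → ℕ) (B : ℕ) (ℙ : Finset ℕ) (prefs : Fin n → ℕ → ℕ → Prop)
    (C P : Profile n) (i : Fin n) (Pi' : Finset ℕ),
    (∀ p ∈ ℙ, c p ≤ B) → (∀ j, IsStrictTotalOrder ℕ (prefs j)) →
    (∀ j, C j ⊆ ℙ) → (∀ j, P j ⊆ C j) → Pi' ⊆ C i ∪ unionP P →
    ¬ SuccOpt U R F n c B ℙ prefs
        (Function.update P i (GREED c B (C i ∪ unionP P) (prefs i))) i Pi'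

/-- First-stage strategyproofness, unrestricted, anticipative. -/
def U_FSSP_A : Prop :=
  ∀ (n : ℕ) (c : ℕ → ℕ) (B : ℕ) (ℙ : Finset ℕ) (prefs : Fin n → ℕ → ℕ → Prop)
    (C P : Profile n) (i : Fin n) (Pi' : Finset ℕ),
    (∀ p ∈ ℙ, c p ≤ B) → (∀ j, IsStrictTotalOrder ℕ (prefs j)) →
    (∀ j, C j ⊆ ℙ) → (∀ j, P j ⊆ C j) → Pi' ⊆ C i ∪ unionP P →
    ¬ SuccAnt U R F n c B ℙ prefs
        (Function.update P i (GREED c B (C i ∪ unionP P) (prefs i))) i Pi'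

end FSSP

section Aux

lemma lt_asymm'' : ∀ a b : ℕ, a < b → ¬ b < a := fun _ _ h h' => absurd h (not_lt.2 h'.le)

lemma first_eq {r : ℕ → ℕ → Prop} (hasym : ∀ a b, r a b → ¬ r b a)
    {P : Finset ℕ} {p : ℕ} (hp : p ∈ P) (h : ∀ q ∈ P, q ≠ p → r p q) :
    first r P = p := by
  have hex : ∃ p' ∈ P, ∀ q ∈ P, q ≠ p' → r p' q := ⟨p, hp, h⟩
  rw [first, dif_pos hex]
  obtain ⟨hmem, hall⟩ := hex.choose_spec
  by_contra hne
  exact hasym _ _ (hall p hp (fun e => hne e.symm)) (h _ hmem hne)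

lemma first_lt_mem (P : Finset ℕ) (h : P.Nonempty) : first (· < ·) P ∈ P := by
  rw [first_eq lt_asymm'' (P.min'_mem h)
    (fun q hq hne => lt_of_le_of_ne (P.min'_le q hq) (Ne.symm hne))]
  exact P.min'_mem h

lemma greedyAux_succ (c : ℕ → ℕ) (r : ℕ → ℕ → Prop) (fuel : ℕ) (P : Finset ℕ) (b : ℕ) :
    greedyAux c r (fuel + 1) P b =
      if P.Nonempty then
        if c (first r P) ≤ b then
          insert (first r P) (greedyAux c r fuel (P.erase (first r P)) (b - c (first r P)))
        else greedyAux c r fuel (P.erase (first r P)) b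
      else ∅ := by
  rw [greedyAux]

lemma greedyAux_subset_lt (c : ℕ → ℕ) :
    ∀ (fuel : ℕ) (P : Finset ℕ) (b : ℕ), greedyAux c (· < ·) fuel P b ⊆ P := by
  intro fuel
  induction fuel with
  | zero => intro P b; rw [greedyAux]; exact Finset.empty_subset _
  | succ n ih =>
    intro P b x hx
    rw [greedyAux_succ] at hx
    split_ifs at hx with h1 h2
    · rcases Finset.mem_insert.1 hx with rfl | hx'
      · exact first_lt_mem P h1
      · exact Finset.erase_subset _ _ (ih _ _ hx')
    · exact Finset.erase_subset _ _ (ih _ _ hx)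
    · simp at hx

lemma GREED_subset_lt (c : ℕ → ℕ) (B : ℕ) (P : Finset ℕ) :
    GREED c B P (· < ·) ⊆ P := greedyAux_subset_lt c _ P B

lemma Tfam_mem_or_empty (𝔓 : Finset (Finset ℕ)) : Tfam 𝔓 = ∅ ∨ Tfam 𝔓 ∈ 𝔓 := by
  rw [Tfam]
  split
  next h => exact Or.inr h.choose_spec.1
  next => exact Or.inl rfl

lemma Tfam_subset {𝔓 : Finset (Finset ℕ)} {Sh : Finset ℕ} (h : ∀ X ∈ 𝔓, X ⊆ Sh) :
    Tfam 𝔓 ⊆ Sh := by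
  rcases Tfam_mem_or_empty 𝔓 with e | e
  · rw [e]; exact Finset.empty_subset _
  · exact h _ e

lemma Astar_subset {U : PrefModel} {n : ℕ} {c : ℕ → ℕ} {B : ℕ} {F : AllocRule}
    {r : ℕ → ℕ → Prop} {Sh : Finset ℕ} {A : Profile n} {i : Fin n}
    (hF : ExhaustiveRule F) (hA : ∀ j, A j ⊆ Sh) :
    Astar U n c B F r Sh A i ⊆ Sh := by
  rw [Astar]
  apply Tfam_subset
  intro X hX
  have hX' := (Finset.mem_filter.1 hX).1
  rw [reachable, Finset.mem_image] at hX'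
  obtain ⟨b, hb, rfl⟩ := hX'
  refine (hF n c B Sh _ ?_).1
  intro j
  rcases eq_or_ne j i with rfl | hj
  · rw [Function.update_self]; exact Finset.mem_powerset.1 hb
  · rw [Function.update_of_ne hj]; exact hA j

lemma exhaustive_full {c : ℕ → ℕ} {B : ℕ} {Sh A : Finset ℕ}
    (h : ExhaustiveAlloc c B Sh A) (hc : Sh.sum c ≤ B) : A = Sh := by
  obtain ⟨hsub, hfeas, hmax⟩ := h
  refine Finset.Subset.antisymm hsub fun p hp => ?_
  by_contra hpn
  refine hmax p hp hpn ?_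
  calc A.sum c + c p = (insert p A).sum c := by rw [Finset.sum_insert hpn]; ring
    _ ≤ Sh.sum c := Finset.sum_le_sum_of_subset (Finset.insert_subset hp hsub)
    _ ≤ B := hc

lemma F_eq_Sh {F : AllocRule} {n : ℕ} {c : ℕ → ℕ} {B : ℕ} {Sh : Finset ℕ} {A : Profile n}
    (hF : ExhaustiveRule F) (hA : ∀ j, A j ⊆ Sh) (hc : Sh.sum c ≤ B) :
    F n c B Sh A = Sh := exhaustive_full (hF n c B Sh A hA) hc

lemma unionP_two (P : Profile 2) : unionP P = P 0 ∪ P 1 := by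
  rw [unionP, show (Finset.univ : Finset (Fin 2)) = {0, 1} from rfl,
    Finset.sup_insert, Finset.sup_singleton, Finset.sup_eq_union]

/-- the cost function of the counterexample -/
def cEx : ℕ → ℕ := fun p => if p = 2 then 3 else 1

lemma step_lt (c : ℕ → ℕ) (fuel : ℕ) (P : Finset ℕ) (b p : ℕ) (hp : p ∈ P)
    (hmin : ∀ q ∈ P, q ≠ p → p < q) :
    greedyAux c (· < ·) (fuel + 1) P b =
      if c p ≤ b then insert p (greedyAux c (· < ·) fuel (P.erase p) (b - c p))
      else greedyAux c (· < ·) fuel (P.erase p) b := by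
  rw [greedyAux_succ, first_eq lt_asymm'' hp hmin, if_pos ⟨p, hp⟩]

lemma G1 : GREED cEx 3 {2, 3} (· < ·) = {2} := by
  rw [GREED, show ({2, 3} : Finset ℕ).card = 2 from by decide,
    show (2 : ℕ) = 1 + 1 from rfl,
    step_lt cEx 1 {2, 3} 3 2 (by decide) (by decide),
    if_pos (by norm_num [cEx]),
    show ({2, 3} : Finset ℕ).erase 2 = {3} from by decide,
    show (3 : ℕ) - cEx 2 = 0 from by norm_num [cEx],
    show (1 : ℕ) = 0 + 1 from rfl,
    step_lt cEx 0 {3} 0 3 (by decide) (by decide),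
    if_neg (by norm_num [cEx])]
  rfl

lemma G2 : GREED cEx 3 {0, 2, 3} (· < ·) = {0, 3} := by
  rw [GREED, show ({0, 2, 3} : Finset ℕ).card = 3 from by decide,
    show (3 : ℕ) = 2 + 1 from rfl,
    step_lt cEx 2 {0, 2, 3} 3 0 (by decide) (by decide),
    if_pos (by norm_num [cEx]),
    show ({0, 2, 3} : Finset ℕ).erase 0 = {2, 3} from by decide,
    show (3 : ℕ) - cEx 0 = 2 from by norm_num [cEx],
    show (2 : ℕ) = 1 + 1 from rfl,
    step_lt cEx 1 {2, 3} 2 2 (by decide) (by decide),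
    if_neg (by norm_num [cEx]),
    show ({2, 3} : Finset ℕ).erase 2 = {3} from by decide,
    show (1 : ℕ) = 0 + 1 from rfl,
    step_lt cEx 0 {3} 2 3 (by decide) (by decide),
    if_pos (by norm_num [cEx])]
  rfl

end Aux
/-- preference orders of the counterexample: everybody uses `<`. -/
def prefsEx : Fin 2 → ℕ → ℕ → Prop := fun _ p q => p < q
/-- awareness profile of the counterexample. -/
def CEx : Profile 2 := fun j => if j = 0 then ({2, 3} : Finset ℕ) else {0}
/-- base shortlisting profile of the counterexample. -/
def PEx : Profile 2 := fun j => if j = 0 then (∅ : Finset ℕ) else {0}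

/-- Under both preference models, no pair of a non-wasteful
shortlisting rule and an exhaustive allocation rule is R-FSSP-A. -/
theorem no_nonWasteful_exhaustive_rfsspA :
    ∀ U : PrefModel, (U = overlapU ∨ U = costU) →
    ∀ (R : ShortRule) (F : AllocRule),
      IsShortRule R → NonWasteful R → ExhaustiveRule F → ¬ R_FSSP_A U R F := by
  intro U hU R F hRs hRnw hFex hA
  set PT : Profile 2 := Function.update PEx 0 (GREED cEx 3 (CEx 0) (prefsEx 0)) with hPTdef
  set PM : Profile 2 := Function.update PT 0 {3} with hPMdef
  have hPT0 : PT 0 = {2} := by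
    rw [hPTdef, Function.update_self, show CEx 0 = {2, 3} from rfl]
    exact G1
  have hPT1 : PT 1 = {0} := by
    rw [hPTdef, Function.update_of_ne (by decide)]; decide
  have hPM0 : PM 0 = {3} := by rw [hPMdef, Function.update_self]
  have hPM1 : PM 1 = {0} := by
    rw [hPMdef, Function.update_of_ne (by decide)]; exact hPT1
  have hPTP : ∀ j, PT j ⊆ ({0, 2, 3} : Finset ℕ) := by
    intro j
    rcases eq_or_ne j 0 with rfl | h
    · rw [hPT0]; decide
    · have h1 : j = 1 := by omega
      subst h1; rw [hPT1]; decide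
  have hPMP : ∀ j, PM j ⊆ ({0, 2, 3} : Finset ℕ) := by
    intro j
    rcases eq_or_ne j 0 with rfl | h
    · rw [hPM0]; decide
    · have h1 : j = 1 := by omega
      subst h1; rw [hPM1]; decide
  have hUT : unionP PT = {0, 2} := by rw [unionP_two, hPT0, hPT1]; decide
  have hUM : unionP PM = {0, 3} := by rw [unionP_two, hPM0, hPM1]; decide
  set Sh := R 2 cEx 3 {0, 2, 3} PT with hShdef
  set Sh' := R 2 cEx 3 {0, 2, 3} PM with hSh'def
  have hShsub : Sh ⊆ {0, 2} := hUT ▸ hRs 2 cEx 3 {0, 2, 3} PT hPTP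
  have hSh'sub : Sh' ⊆ {0, 3} := hUM ▸ hRs 2 cEx 3 {0, 2, 3} PM hPMP
  have hSh' : Sh' = {0, 3} := by
    have hnw := hRnw 2 cEx 3 {0, 2, 3} PM (by decide) hPMP
    rw [← hSh'def] at hnw
    rcases hnw with h | h
    · exfalso
      have h1 : Sh'.sum cEx ≤ ({0, 3} : Finset ℕ).sum cEx :=
        Finset.sum_le_sum_of_subset hSh'sub
      have h2 : ({0, 3} : Finset ℕ).sum cEx = 2 := by decide
      omega
    · rw [h, hUM]
  have h2Sh : 2 ∈ Sh := by
    have hnw := hRnw 2 cEx 3 {0, 2, 3} PT (by decide) hPTP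
    rw [← hShdef] at hnw
    rcases hnw with h | h
    · by_contra h2
      have hsub0 : Sh ⊆ {0} := by
        intro x hx
        rcases Finset.mem_insert.1 (hShsub hx) with rfl | hx'
        · exact Finset.mem_singleton_self 0
        · rw [Finset.mem_singleton] at hx'
          subst hx'
          exact absurd hx h2
      have h1 : Sh.sum cEx ≤ ({0} : Finset ℕ).sum cEx :=
        Finset.sum_le_sum_of_subset hsub0
      have h3 : ({0} : Finset ℕ).sum cEx = 1 := by decide
      omega
    · rw [h, hUT]; decide
  have hShU : Sh ∪ {0, 3} = ({0, 2, 3} : Finset ℕ) := by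
    apply Finset.Subset.antisymm
    · exact Finset.union_subset (hShsub.trans (by decide)) (by decide)
    · intro x hx
      simp only [Finset.mem_insert, Finset.mem_singleton] at hx
      rcases hx with rfl | rfl | rfl
      · exact Finset.mem_union_right _ (by decide)
      · exact Finset.mem_union_left _ h2Sh
      · exact Finset.mem_union_right _ (by decide)
  have hsucc : SuccAnt U R F 2 cEx 3 {0, 2, 3} prefsEx PT 0 {3} := by
    show U cEx (GREED cEx 3 (Sh ∪ Sh') (prefsEx 0))
        (Fstar U 2 cEx 3 F (prefsEx 0) Sh (fun j => GREED cEx 3 Sh (prefsEx j)) 0)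
      < U cEx (GREED cEx 3 (Sh ∪ Sh') (prefsEx 0))
        (Fstar U 2 cEx 3 F (prefsEx 0) Sh' (fun j => GREED cEx 3 Sh' (prefsEx j)) 0)
    have htp : GREED cEx 3 (Sh ∪ Sh') (prefsEx 0) = {0, 3} := by
      rw [hSh', hShU]; exact G2
    have hbT : ∀ j : Fin 2, GREED cEx 3 Sh (prefsEx j) ⊆ Sh :=
      fun _ => GREED_subset_lt cEx 3 Sh
    have hbM : ∀ j : Fin 2, GREED cEx 3 Sh' (prefsEx j) ⊆ Sh' :=
      fun _ => GREED_subset_lt cEx 3 Sh'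
    have hFM : Fstar U 2 cEx 3 F (prefsEx 0) Sh'
        (fun j => GREED cEx 3 Sh' (prefsEx j)) 0 = Sh' := by
      rw [Fstar]
      refine F_eq_Sh hFex ?_ ?_
      · intro j
        rcases eq_or_ne j 0 with rfl | hj
        · rw [Function.update_self]; exact Astar_subset hFex hbM
        · rw [Function.update_of_ne hj]; exact hbM j
      · rw [hSh']; decide
    have hFT : Fstar U 2 cEx 3 F (prefsEx 0) Sh
        (fun j => GREED cEx 3 Sh (prefsEx j)) 0 ⊆ Sh := by
      rw [Fstar]
      refine (hFex 2 cEx 3 Sh _ ?_).1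
      intro j
      rcases eq_or_ne j 0 with rfl | hj
      · rw [Function.update_self]; exact Astar_subset hFex hbT
      · rw [Function.update_of_ne hj]; exact hbT j
    rw [htp, hFM, hSh']
    set out := Fstar U 2 cEx 3 F (prefsEx 0) Sh (fun j => GREED cEx 3 Sh (prefsEx j)) 0
      with hout
    have hsmall : out ∩ ({0, 3} : Finset ℕ) ⊆ {0} := by
      intro x hx
      have h1 := hShsub (hFT (Finset.mem_inter.1 hx).1)
      have h2 := (Finset.mem_inter.1 hx).2
      simp only [Finset.mem_insert, Finset.mem_singleton] at h1 h2 ⊢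
      omega
    rcases hU with rfl | rfl
    · simp only [overlapU]
      have h1 : (out ∩ ({0, 3} : Finset ℕ)).card ≤ ({0} : Finset ℕ).card :=
        Finset.card_le_card hsmall
      have h2 : (({0, 3} : Finset ℕ) ∩ {0, 3}).card = 2 := by decide
      have h3 : ({0} : Finset ℕ).card = 1 := by decide
      omega
    · simp only [costU]
      have h1 : (out ∩ ({0, 3} : Finset ℕ)).sum cEx ≤ ({0} : Finset ℕ).sum cEx :=
        Finset.sum_le_sum_of_subset hsmall
      have h2 : (({0, 3} : Finset ℕ) ∩ {0, 3}).sum cEx = 2 := by decide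
      have h3 : ({0} : Finset ℕ).sum cEx = 1 := by decide
      omega
  exact hA 2 cEx 3 {0, 2, 3} prefsEx CEx PEx 0 {3} (by decide) (fun _ => (inferInstance : IsStrictTotalOrder ℕ (fun p q : ℕ => p < q)))
    (by decide) (by decide) (by decide) hsucc

end PB
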